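/- Let C ≥ 1, let (β_j)_{j≥1} be a sequence of nonnegative real numbers, and let A be a function assigning to every multi-index ν with ν_j ≤ 1 for all j a nonnegative real number A(ν). Assume that for every such multi-index ν ≠ 0 we have A(ν) ≤ C · ∑_{0 ≠ m ≤ ν} binom(ν, m) · (1 + 3^{|m|}) · β^m · A(ν − m). Then for every multi-index ν with ν_j ≤ 1 for all j it holds that A(ν) ≤ C^{|ν|} · 4^{|ν|} · (|ν|! / (log 2)^{|ν|}) · β^ν · A(0). -/

import Mathlib

/-- The order `|ν|` of a multi-index `ν : ℕ →₀ ℕ`. -/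
def multiOrder (ν : ℕ →₀ ℕ) : ℕ := ν.sum fun _ n => n

open Finset Real

lemma multiOrder_add (f g : ℕ →₀ ℕ) : multiOrder (f + g) = multiOrder f + multiOrder g :=
  Finsupp.sum_add_index' (fun _ => rfl) (fun _ _ _ => rfl)

lemma multiOrder_eq_zero_iff {ν : ℕ →₀ ℕ} : multiOrder ν = 0 ↔ ν = 0 := by
  unfold multiOrder
  rw [Finsupp.sum, Finset.sum_eq_zero_iff]
  constructor
  · intro h; ext j
    by_cases hj : j ∈ ν.support
    · exact h j hj
    · simpa using Finsupp.notMem_support_iff.mp hj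
  · intro h; subst h; simp

lemma multiOrder_eq_card {ν : ℕ →₀ ℕ} (hν : ∀ j, ν j ≤ 1) :
    multiOrder ν = ν.support.card := by
  unfold multiOrder
  rw [Finsupp.sum, Finset.card_eq_sum_ones]
  refine Finset.sum_congr rfl fun j hj => ?_
  have h1 := hν j
  have h2 : ν j ≠ 0 := Finsupp.mem_support_iff.mp hj
  omega

lemma prod_pow_sub {β : ℕ → ℝ} {m ν : ℕ →₀ ℕ} (hm : m ≤ ν) :
    (∏ j ∈ m.support, β j ^ m j) * (∏ j ∈ (ν - m).support, β j ^ (ν - m) j)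
      = ∏ j ∈ ν.support, β j ^ ν j := by
  have h : m + (ν - m) = ν := by
    ext j; simp only [Finsupp.coe_add, Pi.add_apply, Finsupp.tsub_apply]
    have := hm j; omega
  have := Finsupp.prod_add_index' (f := m) (g := ν - m)
    (h := fun j n => β j ^ n) (fun _ => pow_zero _) (fun j a b => pow_add _ _ _)
  rw [h] at this
  exact this.symm

lemma sum_Iic_erase (ν : ℕ →₀ ℕ) (hν : ∀ j, ν j ≤ 1) (g : ℕ → ℝ) :
    ∑ m ∈ (Finset.Iic ν).erase 0, g (multiOrder m)
      = ∑ s ∈ ν.support.powerset.erase ∅, g s.card := by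
  classical
  refine Finset.sum_bij' (fun m _ => m.support) (fun s _ => ν.filter (· ∈ s))
    ?_ ?_ ?_ ?_ ?_
  · intro m hm
    rw [Finset.mem_erase, Finset.mem_Iic] at hm
    rw [Finset.mem_erase, Finset.mem_powerset]
    exact ⟨by simpa [Finsupp.support_eq_empty] using hm.1,
      Finsupp.support_monotone hm.2⟩
  · intro s hs
    rw [Finset.mem_erase, Finset.mem_powerset] at hs
    rw [Finset.mem_erase, Finset.mem_Iic]
    constructor
    · intro h
      replace h : Finsupp.filter (· ∈ s) ν = 0 := h
      apply hs.1
      ext j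
      by_cases hj : j ∈ s
      · have : ν.filter (· ∈ s) j = 0 := by rw [h]; rfl

        rw [Finsupp.filter_apply_pos _ _ hj] at this
        have := hs.2 hj
        simp [Finsupp.mem_support_iff] at this
        omega
      · simp [hj]
    · intro j
      rw [Finsupp.filter_apply]
      split <;> simp
  · intro m hm
    rw [Finset.mem_erase, Finset.mem_Iic] at hm
    ext j
    rw [Finsupp.filter_apply]
    split
    · next h =>
      have h1 := hν j
      have h2 := hm.2 j
      have h3 : m j ≠ 0 := Finsupp.mem_support_iff.mp h
      omega
    · next h => exact (Finsupp.notMem_support_iff.mp h).symm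
  · intro s hs
    rw [Finset.mem_erase, Finset.mem_powerset] at hs
    show (Finsupp.filter (· ∈ s) ν).support = s
    rw [Finsupp.support_filter]
    ext j
    simp only [Finset.mem_filter, Finsupp.mem_support_iff]
    constructor
    · exact fun h => h.2
    · intro hj
      refine ⟨?_, hj⟩
      have := hs.2 hj
      exact Finsupp.mem_support_iff.mp this
  · intro m hm
    rw [Finset.mem_erase, Finset.mem_Iic] at hm
    congr 1
    exact multiOrder_eq_card fun j => le_trans (hm.2 j) (hν j)

lemma sum_powerset_erase (S : Finset ℕ) (g : ℕ → ℝ) :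
    ∑ s ∈ S.powerset.erase ∅, g s.card
      = ∑ l ∈ Finset.Icc 1 S.card, (S.card.choose l : ℝ) * g l := by
  classical
  have h1 : ∑ s ∈ S.powerset, g s.card
      = ∑ l ∈ Finset.range (S.card + 1), (S.card.choose l : ℝ) * g l := by
    rw [Finset.sum_powerset]
    refine Finset.sum_congr rfl fun l _ => ?_
    rw [Finset.sum_congr rfl (fun s hs => by
      rw [(Finset.mem_powersetCard.mp hs).2]), Finset.sum_const,
      Finset.card_powersetCard, nsmul_eq_mul]
  have h0 : (∅ : Finset ℕ) ∈ S.powerset := by simp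
  have h2 := Finset.sum_erase_add S.powerset (fun s => g s.card) h0
  have h3 : Finset.range (S.card + 1) = insert 0 (Finset.Icc 1 S.card) := by
    ext l; simp; omega
  rw [h3, Finset.sum_insert (by simp)] at h1
  simp only [Finset.card_empty] at h2
  have : (S.card.choose 0 : ℝ) * g 0 = g 0 := by simp
  linarith [h1, h2, this]

noncomputable def bnd (C : ℝ) (k : ℕ) : ℝ :=
  C ^ k * 4 ^ k * ((Nat.factorial k : ℝ) / (Real.log 2) ^ k)

lemma exp_bound_num : Real.exp (Real.log 2 / 4) ≤ 1.2 ∧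
    Real.exp (3 * (Real.log 2 / 4)) ≤ 1.7 := by
  have h1 : Real.log 2 ≤ 4 * Real.log 1.2 := by
    calc Real.log 2 ≤ Real.log (1.2 ^ 4) := Real.log_le_log (by norm_num) (by norm_num)
      _ = 4 * Real.log 1.2 := by rw [Real.log_pow]; norm_num
  have h2 : 3 * Real.log 2 ≤ 4 * Real.log 1.7 := by
    calc 3 * Real.log 2 = Real.log (2 ^ 3) := by rw [Real.log_pow]; norm_num
      _ ≤ Real.log (1.7 ^ 4) := Real.log_le_log (by norm_num) (by norm_num)
      _ = 4 * Real.log 1.7 := by rw [Real.log_pow]; norm_num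
  constructor
  · calc Real.exp (Real.log 2 / 4) ≤ Real.exp (Real.log 1.2) :=
        Real.exp_le_exp.mpr (by linarith)
      _ = 1.2 := Real.exp_log (by norm_num)
  · calc Real.exp (3 * (Real.log 2 / 4)) ≤ Real.exp (Real.log 1.7) :=
        Real.exp_le_exp.mpr (by linarith)
      _ = 1.7 := Real.exp_log (by norm_num)

lemma exp_tail_bound (y : ℝ) (hy : 0 ≤ y) (n : ℕ) :
    ∑ l ∈ Finset.Icc 1 n, y ^ l / (Nat.factorial l : ℝ) ≤ Real.exp y - 1 := by
  have h3 : Finset.range (n + 1) = insert 0 (Finset.Icc 1 n) := by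
    ext l; simp; omega
  have := Real.sum_le_exp_of_nonneg hy (n + 1)
  rw [h3, Finset.sum_insert (by simp)] at this
  simp only [pow_zero, Nat.factorial_zero, Nat.cast_one, div_one] at this
  linarith

lemma sum_small (n : ℕ) :
    ∑ l ∈ Finset.Icc 1 n,
      (1 + 3 ^ l : ℝ) * (Real.log 2 / 4) ^ l / (Nat.factorial l : ℝ) ≤ 1 := by
  have hL : (0:ℝ) < Real.log 2 := Real.log_pos (by norm_num)
  set x : ℝ := Real.log 2 / 4 with hx
  have hx0 : 0 ≤ x := by positivity
  have key : ∀ l ∈ Finset.Icc 1 n, (1 + 3 ^ l : ℝ) * x ^ l / (Nat.factorial l : ℝ)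
      = x ^ l / (Nat.factorial l : ℝ) + (3 * x) ^ l / (Nat.factorial l : ℝ) := by
    intro l _
    rw [mul_pow]
    ring
  rw [Finset.sum_congr rfl key, Finset.sum_add_distrib]
  have h1 := exp_tail_bound x hx0 n
  have h2 := exp_tail_bound (3 * x) (by positivity) n
  obtain ⟨e1, e2⟩ := exp_bound_num
  rw [← hx] at e1 e2
  linarith

lemma key_ineq (C : ℝ) (hC : 1 ≤ C) (n : ℕ) :
    C * ∑ l ∈ Finset.Icc 1 n, (n.choose l : ℝ) * ((1 + 3 ^ l) * bnd C (n - l))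
      ≤ bnd C n := by
  have hL : (0:ℝ) < Real.log 2 := Real.log_pos (by norm_num)
  have hC0 : (0:ℝ) < C := lt_of_lt_of_le one_pos hC
  set L := Real.log 2 with hLdef
  -- Step 1: pull C inside and bound C * C^(n-l) ≤ C^n
  have step1 : C * ∑ l ∈ Finset.Icc 1 n, (n.choose l : ℝ) * ((1 + 3 ^ l) * bnd C (n - l))
      ≤ C ^ n * ∑ l ∈ Finset.Icc 1 n,
          (n.choose l : ℝ) * (1 + 3 ^ l) * (4 ^ (n - l) * ((Nat.factorial (n-l) : ℝ) / L ^ (n - l))) := by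
    rw [Finset.mul_sum, Finset.mul_sum]
    refine Finset.sum_le_sum fun l hl => ?_
    rw [Finset.mem_Icc] at hl
    have hpow : C * C ^ (n - l) ≤ C ^ n := by
      rw [← pow_succ']
      exact pow_le_pow_right₀ hC (by omega)
    unfold bnd
    have hnn : (0:ℝ) ≤ (n.choose l : ℝ) * (1 + 3 ^ l) *
        (4 ^ (n - l) * ((Nat.factorial (n-l) : ℝ) / L ^ (n - l))) := by positivity
    calc C * ((n.choose l : ℝ) * ((1 + 3 ^ l) *
          (C ^ (n-l) * 4 ^ (n-l) * ((Nat.factorial (n-l) : ℝ) / L ^ (n - l)))))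
        = (C * C ^ (n - l)) * ((n.choose l : ℝ) * (1 + 3 ^ l) *
            (4 ^ (n - l) * ((Nat.factorial (n-l) : ℝ) / L ^ (n - l)))) := by ring
      _ ≤ C ^ n * ((n.choose l : ℝ) * (1 + 3 ^ l) *
            (4 ^ (n - l) * ((Nat.factorial (n-l) : ℝ) / L ^ (n - l)))) :=
          mul_le_mul_of_nonneg_right hpow hnn
  -- Step 2: rewrite each term
  have step2 : ∀ l ∈ Finset.Icc 1 n,
      (n.choose l : ℝ) * (1 + 3 ^ l) * (4 ^ (n - l) * ((Nat.factorial (n-l) : ℝ) / L ^ (n - l)))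
        = (4 ^ n * ((Nat.factorial n : ℝ) / L ^ n)) *
            ((1 + 3 ^ l) * (L / 4) ^ l / (Nat.factorial l : ℝ)) := by
    intro l hl
    rw [Finset.mem_Icc] at hl
    have hln : l ≤ n := hl.2
    rw [Nat.cast_choose ℝ hln, pow_sub₀ (4:ℝ) (by norm_num) hln,
      pow_sub₀ L hL.ne' hln, div_pow]
    have f1 : (Nat.factorial l : ℝ) ≠ 0 := Nat.cast_ne_zero.mpr (Nat.factorial_ne_zero l)
    have f2 : (Nat.factorial (n - l) : ℝ) ≠ 0 := Nat.cast_ne_zero.mpr (Nat.factorial_ne_zero _)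
    have f3 : L ^ n ≠ 0 := pow_ne_zero _ hL.ne'
    have f4 : L ^ l ≠ 0 := pow_ne_zero _ hL.ne'
    field_simp
  rw [Finset.sum_congr rfl step2, ← Finset.mul_sum] at step1
  have step3 := sum_small n
  rw [← hLdef] at step3
  have hpos : (0:ℝ) ≤ C ^ n * (4 ^ n * ((Nat.factorial n : ℝ) / L ^ n)) := by positivity
  calc C * ∑ l ∈ Finset.Icc 1 n, (n.choose l : ℝ) * ((1 + 3 ^ l) * bnd C (n - l))
      ≤ C ^ n * ((4 ^ n * ((Nat.factorial n : ℝ) / L ^ n)) *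
          ∑ l ∈ Finset.Icc 1 n, (1 + 3 ^ l) * (L / 4) ^ l / (Nat.factorial l : ℝ)) := step1
    _ = (C ^ n * (4 ^ n * ((Nat.factorial n : ℝ) / L ^ n))) *
          ∑ l ∈ Finset.Icc 1 n, (1 + 3 ^ l) * (L / 4) ^ l / (Nat.factorial l : ℝ) := by ring
    _ ≤ (C ^ n * (4 ^ n * ((Nat.factorial n : ℝ) / L ^ n))) * 1 :=
        mul_le_mul_of_nonneg_left step3 hpos
    _ = bnd C n := by unfold bnd; ring

/-- final parametric regularity bound in the lognormal setting
(factorial over powers of `log 2`). -/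
theorem stmt2 (C : ℝ) (hC : 1 ≤ C) (β : ℕ → ℝ) (hβ : ∀ j, 0 ≤ β j)
    (A : (ℕ →₀ ℕ) → ℝ) (hA : ∀ ν, 0 ≤ A ν)
    (hrec : ∀ ν : ℕ →₀ ℕ, (∀ j, ν j ≤ 1) → ν ≠ 0 →
      A ν ≤ C * ∑ m ∈ (Finset.Iic ν).erase 0,
        (∏ j ∈ ν.support, (Nat.choose (ν j) (m j) : ℝ)) *
          (1 + 3 ^ (multiOrder m)) * (∏ j ∈ m.support, β j ^ m j) * A (ν - m)) :
    ∀ ν : ℕ →₀ ℕ, (∀ j, ν j ≤ 1) →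
      A ν ≤ C ^ (multiOrder ν) * 4 ^ (multiOrder ν) *
        ((Nat.factorial (multiOrder ν) : ℝ) / (Real.log 2) ^ (multiOrder ν)) *
        (∏ j ∈ ν.support, β j ^ ν j) * A 0 := by
  suffices H : ∀ n : ℕ, ∀ ν : ℕ →₀ ℕ, (∀ j, ν j ≤ 1) → multiOrder ν = n →
      A ν ≤ bnd C n * (∏ j ∈ ν.support, β j ^ ν j) * A 0 by
    intro ν hν
    have := H (multiOrder ν) ν hν rfl
    unfold bnd at this
    linarith
  intro n
  induction n using Nat.strong_induction_on with
  | _ n IH =>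
    intro ν hν hord
    by_cases h0 : ν = 0
    · subst h0
      have : n = 0 := by rw [← hord]; exact multiOrder_eq_zero_iff.mpr rfl
      subst this
      simp [bnd]
    · -- main inductive step
      have hC0 : (0:ℝ) < C := lt_of_lt_of_le one_pos hC
      have hβprod : ∀ f : ℕ →₀ ℕ, (0:ℝ) ≤ ∏ j ∈ f.support, β j ^ f j :=
        fun f => Finset.prod_nonneg fun j _ => pow_nonneg (hβ j) _
      -- termwise bound
      have hterm : ∀ m ∈ (Finset.Iic ν).erase 0,
          (∏ j ∈ ν.support, (Nat.choose (ν j) (m j) : ℝ)) *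
            (1 + 3 ^ (multiOrder m)) * (∏ j ∈ m.support, β j ^ m j) * A (ν - m)
          ≤ ((1 + 3 ^ (multiOrder m)) * bnd C (n - multiOrder m)) *
              ((∏ j ∈ ν.support, β j ^ ν j) * A 0) := by
        intro m hm
        rw [Finset.mem_erase, Finset.mem_Iic] at hm
        have hmle : ∀ j, m j ≤ ν j := fun j => hm.2 j
        have hchoose : (∏ j ∈ ν.support, (Nat.choose (ν j) (m j) : ℝ)) = 1 := by
          refine Finset.prod_eq_one fun j _ => ?_
          have h1 := hν j
          have h2 := hmle j
          have : Nat.choose (ν j) (m j) = 1 := by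
            interval_cases h : ν j <;> interval_cases h2 : m j <;> rfl
          rw [this]; norm_num
        have hordm : multiOrder (ν - m) = n - multiOrder m ∧ multiOrder m ≤ n := by
          have hadd : m + (ν - m) = ν := by
            ext j; simp only [Finsupp.coe_add, Pi.add_apply, Finsupp.tsub_apply]
            have := hmle j; omega
          have := multiOrder_add m (ν - m)
          rw [hadd, hord] at this
          omega
        have hm1 : 1 ≤ multiOrder m := by
          rcases Nat.eq_zero_or_pos (multiOrder m) with h | h
          · exact absurd (multiOrder_eq_zero_iff.mp h) hm.1
          · exact h
        have hlt : n - multiOrder m < n := by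
          have : 1 ≤ n := le_trans hm1 hordm.2
          omega
        have hsub : ∀ j, (ν - m) j ≤ 1 := by
          intro j
          rw [Finsupp.tsub_apply]
          exact le_trans (Nat.sub_le _ _) (hν j)
        have hIH := IH (n - multiOrder m) hlt (ν - m) hsub hordm.1
        rw [hchoose, one_mul]
        have h3nn : (0:ℝ) ≤ 1 + 3 ^ (multiOrder m) := by positivity
        calc (1 + 3 ^ (multiOrder m) : ℝ) * (∏ j ∈ m.support, β j ^ m j) * A (ν - m)
            ≤ (1 + 3 ^ (multiOrder m)) * (∏ j ∈ m.support, β j ^ m j) *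
                (bnd C (n - multiOrder m) * (∏ j ∈ (ν - m).support, β j ^ (ν - m) j) * A 0) := by
              apply mul_le_mul_of_nonneg_left hIH
              exact mul_nonneg h3nn (hβprod m)
          _ = ((1 + 3 ^ (multiOrder m)) * bnd C (n - multiOrder m)) *
                (((∏ j ∈ m.support, β j ^ m j) * (∏ j ∈ (ν - m).support, β j ^ (ν - m) j)) * A 0) := by
              ring
          _ = ((1 + 3 ^ (multiOrder m)) * bnd C (n - multiOrder m)) *
                ((∏ j ∈ ν.support, β j ^ ν j) * A 0) := by
              rw [prod_pow_sub hm.2]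
      -- sum of termwise bounds
      have hsum : ∑ m ∈ (Finset.Iic ν).erase 0,
          ((1 + 3 ^ (multiOrder m) : ℝ) * bnd C (n - multiOrder m)) *
            ((∏ j ∈ ν.support, β j ^ ν j) * A 0)
          = (∑ l ∈ Finset.Icc 1 n, (n.choose l : ℝ) * ((1 + 3 ^ l) * bnd C (n - l))) *
              ((∏ j ∈ ν.support, β j ^ ν j) * A 0) := by
        rw [← Finset.sum_mul]
        congr 1
        have hcard : ν.support.card = n := by rw [← multiOrder_eq_card hν, hord]
        rw [sum_Iic_erase ν hν (fun k => (1 + 3 ^ k : ℝ) * bnd C (n - k)),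
          sum_powerset_erase ν.support (fun k => (1 + 3 ^ k : ℝ) * bnd C (n - k)), hcard]
      calc A ν ≤ C * ∑ m ∈ (Finset.Iic ν).erase 0,
            (∏ j ∈ ν.support, (Nat.choose (ν j) (m j) : ℝ)) *
              (1 + 3 ^ (multiOrder m)) * (∏ j ∈ m.support, β j ^ m j) * A (ν - m) :=
            hrec ν hν h0
        _ ≤ C * ∑ m ∈ (Finset.Iic ν).erase 0,
            ((1 + 3 ^ (multiOrder m) : ℝ) * bnd C (n - multiOrder m)) *
              ((∏ j ∈ ν.support, β j ^ ν j) * A 0) :=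
            mul_le_mul_of_nonneg_left (Finset.sum_le_sum hterm) hC0.le
        _ = (C * ∑ l ∈ Finset.Icc 1 n, (n.choose l : ℝ) * ((1 + 3 ^ l) * bnd C (n - l))) *
              ((∏ j ∈ ν.support, β j ^ ν j) * A 0) := by rw [hsum]; ring
        _ ≤ bnd C n * ((∏ j ∈ ν.support, β j ^ ν j) * A 0) := by
            apply mul_le_mul_of_nonneg_right (key_ineq C hC n)
            exact mul_nonneg (hβprod ν) (hA 0)
        _ = bnd C n * (∏ j ∈ ν.support, β j ^ ν j) * A 0 := by ring
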